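/- Let g ∈ L¹(Γ × S¹) be such that for every integer p ≥ 0 and every m ∈ ℤ with |m| > p and p − m even, the function (α, β) ↦ e^{im(β+α)} (sin α)^p (cos α) g(e^{iβ}, e^{i(α+β)}) is absolutely integrable on (−π,π]² and ∫_{−π}^{π} ∫_{−π}^{π} e^{im(β+α)} (sin α)^p (cos α) g(e^{iβ}, e^{i(α+β)}) dα dβ = 0. Then the Fourier coefficients of g satisfy g_{n,k} = (−1)^k g_{n+2k,−k} for all odd n ≤ −1 and all k ≤ 0. -/

import Mathlib

open MeasureTheory Filter Set

noncomputable section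

/-- Fourier coefficients of a function on the torus `Γ × S¹`. -/
def fcoef (g : ℝ → ℝ → ℂ) (n k : ℤ) : ℂ :=
  (1 / (2 * Real.pi) ^ 2 : ℂ) *
    ∫ β in Ioc (-Real.pi) Real.pi,
      ∫ θ in Ioc (-Real.pi) Real.pi,
        g β θ * Complex.exp (-Complex.I * (n : ℂ) * (θ : ℂ)) *
          Complex.exp (-Complex.I * (k : ℂ) * (β : ℂ))

section AUX

lemma zpow_exp_aux (α : ℝ) (j : ℤ) :
    Complex.exp (Complex.I * (j : ℂ) * (α : ℂ)) = Complex.exp (Complex.I * α) ^ j := by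
  rw [← Complex.exp_int_mul]
  ring_nf

lemma exp_I_int_periodic (c : ℤ) :
    Function.Periodic (fun θ : ℝ => Complex.exp (Complex.I * (c : ℂ) * (θ : ℝ))) (2 * Real.pi) := by
  intro x
  show Complex.exp (Complex.I * (c : ℂ) * ((x + 2 * Real.pi : ℝ) : ℂ))
      = Complex.exp (Complex.I * (c : ℂ) * (x : ℂ))
  push_cast
  rw [show Complex.I * (c : ℂ) * ((x : ℂ) + 2 * (Real.pi : ℂ))
      = Complex.I * (c : ℂ) * (x : ℂ) + (c : ℂ) * (2 * (Real.pi : ℂ) * Complex.I) by ring,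
    Complex.exp_add, Complex.exp_int_mul_two_pi_mul_I, mul_one]

lemma norm_exp_I_int (c : ℤ) (x : ℝ) : ‖Complex.exp (Complex.I * (c : ℂ) * (x : ℝ))‖ = 1 := by
  rw [show Complex.I * (c : ℂ) * (x : ℝ) = (((c * x : ℝ)) : ℂ) * Complex.I by push_cast; ring]
  exact Complex.norm_exp_ofReal_mul_I _

lemma norm_exp_neg_I_int (c : ℤ) (x : ℝ) :
    ‖Complex.exp (-Complex.I * (c : ℂ) * (x : ℝ))‖ = 1 := by
  rw [show -Complex.I * (c : ℂ) * (x : ℝ) = (((-c * x : ℝ)) : ℂ) * Complex.I by push_cast; ring]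
  exact Complex.norm_exp_ofReal_mul_I _

lemma per_big (f : ℝ → ℂ) (hper : Function.Periodic f (2 * Real.pi))
    (hint : IntervalIntegrable f volume (-Real.pi) Real.pi) :
    IntervalIntegrable f volume (-(3 * Real.pi)) (3 * Real.pi) := by
  have heq : (fun x => f (x + 2 * Real.pi)) = f := funext fun x => hper x
  have hL : IntervalIntegrable f volume (-(3 * Real.pi)) (-Real.pi) := by
    have h := hint.comp_add_right (2 * Real.pi)
    rw [heq, show -Real.pi - 2 * Real.pi = -(3 * Real.pi) by ring,
      show Real.pi - 2 * Real.pi = -Real.pi by ring] at h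
    exact h
  have hR : IntervalIntegrable f volume Real.pi (3 * Real.pi) := by
    have h := hint.comp_add_right (-(2 * Real.pi))
    have heq2 : (fun x => f (x + -(2 * Real.pi))) = f := funext fun x => by
      rw [show x + -(2 * Real.pi) = x - 2 * Real.pi by ring, ← hper, sub_add_cancel]
    rw [heq2, show -Real.pi - -(2 * Real.pi) = Real.pi by ring,
      show Real.pi - -(2 * Real.pi) = 3 * Real.pi by ring] at h
    exact h
  exact (hL.trans hint).trans hR

lemma per_shift_integrable (f : ℝ → ℂ) (hper : Function.Periodic f (2 * Real.pi))
    (hint : IntegrableOn f (Ioc (-Real.pi) Real.pi)) (β : ℝ)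
    (hβ : β ∈ Icc (-Real.pi) Real.pi) :
    IntegrableOn (fun α => f (α + β)) (Ioc (-Real.pi) Real.pi) := by
  have hπ := Real.pi_pos
  have hle : (-Real.pi : ℝ) ≤ Real.pi := by linarith
  have hint' : IntervalIntegrable f volume (-Real.pi) Real.pi :=
    (intervalIntegrable_iff_integrableOn_Ioc_of_le hle).mpr hint
  have hbig := per_big f hper hint'
  obtain ⟨hβ1, hβ2⟩ := hβ
  have hwin : IntervalIntegrable f volume (-Real.pi + β) (Real.pi + β) := by
    refine hbig.mono_set ?_
    rw [uIcc_of_le (by linarith), uIcc_of_le (by linarith)]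
    exact Icc_subset_Icc (by linarith) (by linarith)
  have h := hwin.comp_add_right β
  rw [show -Real.pi + β - β = -Real.pi by ring, show Real.pi + β - β = Real.pi by ring] at h
  exact (intervalIntegrable_iff_integrableOn_Ioc_of_le hle).mp h

lemma per_shift_integral (f : ℝ → ℂ) (hper : Function.Periodic f (2 * Real.pi)) (β : ℝ) :
    ∫ α in Ioc (-Real.pi) Real.pi, f (α + β) = ∫ θ in Ioc (-Real.pi) Real.pi, f θ := by
  have hπ := Real.pi_pos
  have hle : (-Real.pi : ℝ) ≤ Real.pi := by linarith
  rw [← intervalIntegral.integral_of_le hle, ← intervalIntegral.integral_of_le hle,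
    intervalIntegral.integral_comp_add_right]
  have h := hper.intervalIntegral_add_eq (-Real.pi + β) (-Real.pi)
  rw [show -Real.pi + β + 2 * Real.pi = Real.pi + β by ring,
    show -Real.pi + 2 * Real.pi = Real.pi by ring] at h
  exact h

lemma T1 (p : ℕ) (α : ℝ) :
    (Real.sin α : ℂ) ^ p * (Real.cos α : ℂ) =
      (1 / ((2 * Complex.I) ^ p * 2)) *
        ∑ l ∈ Finset.range (p + 1), ((p.choose l : ℂ) * (-1) ^ (p - l) *
          (Complex.exp (Complex.I * ((2 * (l : ℤ) - p + 1 : ℤ) : ℂ) * α) +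
           Complex.exp (Complex.I * ((2 * (l : ℤ) - p - 1 : ℤ) : ℂ) * α))) := by
  set z : ℂ := Complex.exp (Complex.I * α) with hz
  have hz0 : z ≠ 0 := Complex.exp_ne_zero _
  have hsin : (Real.sin α : ℂ) = (z - z⁻¹) * (2 * Complex.I)⁻¹ := by
    rw [Complex.ofReal_sin, Complex.sin, hz, ← Complex.exp_neg]
    rw [show -(α : ℂ) * Complex.I = -(Complex.I * α) by ring,
      show (α : ℂ) * Complex.I = Complex.I * α by ring]
    rw [Complex.exp_neg, mul_inv, Complex.inv_I]
    ring
  have hcos : (Real.cos α : ℂ) = (z + z⁻¹) / 2 := by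
    rw [Complex.ofReal_cos, Complex.cos, hz, ← Complex.exp_neg]
    rw [show -(α : ℂ) * Complex.I = -(Complex.I * α) by ring,
      show (α : ℂ) * Complex.I = Complex.I * α by ring]
  rw [hsin, hcos, mul_pow, sub_pow]
  rw [Finset.sum_mul, Finset.sum_mul, Finset.mul_sum]
  refine Finset.sum_congr rfl fun l hl => ?_
  rw [Finset.mem_range] at hl
  have hlp : l ≤ p := Nat.lt_succ_iff.mp hl
  have hzl : ∀ j : ℤ, Complex.exp (Complex.I * (j : ℂ) * (α : ℂ)) = z ^ j :=
    fun j => zpow_exp_aux α j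
  rw [hzl, hzl]
  have e1 : z ^ (2 * (l : ℤ) - p + 1) = z ^ l * (z⁻¹) ^ (p - l) * z := by
    rw [inv_pow, ← zpow_natCast z l, ← zpow_natCast z (p - l), ← zpow_neg,
      ← zpow_add₀ hz0, ← zpow_add_one₀ hz0]
    congr 1
    have : ((p - l : ℕ) : ℤ) = (p : ℤ) - l := by omega
    omega
  have e2 : z ^ (2 * (l : ℤ) - p - 1) = z ^ l * (z⁻¹) ^ (p - l) * z⁻¹ := by
    rw [inv_pow, ← zpow_natCast z l, ← zpow_natCast z (p - l), ← zpow_neg,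
      ← zpow_add₀ hz0, ← zpow_sub_one₀ hz0]
    congr 1
    have : ((p - l : ℕ) : ℤ) = (p : ℤ) - l := by omega
    omega
  have hpow : ((-1 : ℂ)) ^ (l + p) = (-1) ^ (p - l) := by
    rw [show l + p = (p - l) + 2 * l by omega, pow_add, pow_mul]
    simp
  rw [e1, e2, hpow, inv_pow]
  ring_nf
  simp only [one_div, inv_pow]
  ring

lemma cont_exp_I (c : ℤ) :
    Continuous fun x : ℝ => Complex.exp (Complex.I * (c : ℂ) * (x : ℝ)) :=
  Complex.continuous_exp.comp (continuous_const.mul Complex.continuous_ofReal)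

lemma cont_exp_neg_I (c : ℤ) :
    Continuous fun x : ℝ => Complex.exp (-Complex.I * (c : ℂ) * (x : ℝ)) :=
  Complex.continuous_exp.comp (continuous_const.mul Complex.continuous_ofReal)

lemma cont_exp_I_snd (c : ℤ) :
    Continuous fun q : ℝ × ℝ => Complex.exp (Complex.I * (c : ℂ) * (q.2 : ℝ)) :=
  Complex.continuous_exp.comp
    (continuous_const.mul (Complex.continuous_ofReal.comp continuous_snd))

lemma cont_exp_neg_I_fst (c : ℤ) :
    Continuous fun q : ℝ × ℝ => Complex.exp (-Complex.I * (c : ℂ) * (q.1 : ℝ)) :=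
  Complex.continuous_exp.comp
    (continuous_const.mul (Complex.continuous_ofReal.comp continuous_fst))

end AUX

section MAIN

variable (g : ℝ → ℝ → ℂ)

lemma hprod_aux
    (hgint : IntegrableOn (fun q : ℝ × ℝ => g q.1 q.2)
      (Ioc (-Real.pi) Real.pi ×ˢ Ioc (-Real.pi) Real.pi)) :
    Integrable (fun q : ℝ × ℝ => g q.1 q.2)
      ((volume.restrict (Ioc (-Real.pi) Real.pi)).prod
        (volume.restrict (Ioc (-Real.pi) Real.pi))) := by
  rw [Measure.prod_restrict, ← Measure.volume_eq_prod]
  exact hgint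

lemma eterm_inner_integrable (c : ℤ)
    (hgint : IntegrableOn (fun q : ℝ × ℝ => g q.1 q.2)
      (Ioc (-Real.pi) Real.pi ×ˢ Ioc (-Real.pi) Real.pi)) :
    Integrable (fun q : ℝ × ℝ =>
        Complex.exp (Complex.I * (c : ℂ) * (q.2 : ℝ)) * g q.1 q.2)
      ((volume.restrict (Ioc (-Real.pi) Real.pi)).prod
        (volume.restrict (Ioc (-Real.pi) Real.pi))) := by
  refine Integrable.bdd_mul (hprod_aux g hgint) ?_ (c := 1) (Filter.Eventually.of_forall fun q => ?_)
  · exact (cont_exp_I_snd c).aestronglyMeasurable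
  · rw [norm_exp_I_int]

lemma eterm_integrable (m j : ℤ)
    (hgint : IntegrableOn (fun q : ℝ × ℝ => g q.1 q.2)
      (Ioc (-Real.pi) Real.pi ×ˢ Ioc (-Real.pi) Real.pi)) :
    Integrable (fun q : ℝ × ℝ =>
        Complex.exp (-Complex.I * (j : ℂ) * (q.1 : ℝ)) *
         (Complex.exp (Complex.I * ((m + j : ℤ) : ℂ) * (q.2 : ℝ)) * g q.1 q.2))
      ((volume.restrict (Ioc (-Real.pi) Real.pi)).prod
        (volume.restrict (Ioc (-Real.pi) Real.pi))) := by
  refine Integrable.bdd_mul (eterm_inner_integrable g (m + j) hgint) ?_ (c := 1) (Filter.Eventually.of_forall fun q => ?_)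
  · exact (cont_exp_neg_I_fst j).aestronglyMeasurable
  · rw [norm_exp_neg_I_int]

lemma eterm_integral (m j : ℤ) :
    (∫ β in Ioc (-Real.pi) Real.pi, ∫ θ in Ioc (-Real.pi) Real.pi,
        Complex.exp (-Complex.I * (j : ℂ) * (β : ℝ)) *
         (Complex.exp (Complex.I * ((m + j : ℤ) : ℂ) * (θ : ℝ)) * g β θ))
      = (2 * (Real.pi : ℂ)) ^ 2 * fcoef g (-(m + j)) j := by
  have hne : ((2 : ℂ) * (Real.pi : ℂ)) ^ 2 ≠ 0 :=
    pow_ne_zero _ (mul_ne_zero two_ne_zero (Complex.ofReal_ne_zero.mpr Real.pi_ne_zero))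
  rw [fcoef, ← mul_assoc, mul_one_div, div_self hne, one_mul]
  have hpt2 : ∀ β θ : ℝ,
      g β θ * Complex.exp (-Complex.I * ((-(m + j) : ℤ) : ℂ) * (θ : ℂ)) *
        Complex.exp (-Complex.I * (j : ℂ) * (β : ℂ))
      = Complex.exp (-Complex.I * (j : ℂ) * (β : ℝ)) *
         (Complex.exp (Complex.I * ((m + j : ℤ) : ℂ) * (θ : ℝ)) * g β θ) := by
    intro β θ
    rw [show -Complex.I * ((-(m + j) : ℤ) : ℂ) * (θ : ℂ)
        = Complex.I * ((m + j : ℤ) : ℂ) * (θ : ℂ) by push_cast; ring]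
    ring
  simp_rw [hpt2]

end MAIN

section EXPAND

variable (g : ℝ → ℝ → ℂ)

lemma moment_expand
    (hgper : ∀ β θ : ℝ, g (β + 2 * Real.pi) θ = g β θ ∧ g β (θ + 2 * Real.pi) = g β θ)
    (hgint : IntegrableOn (fun q : ℝ × ℝ => g q.1 q.2)
      (Ioc (-Real.pi) Real.pi ×ˢ Ioc (-Real.pi) Real.pi))
    (p : ℕ) (m : ℤ)
    (hzero : (∫ β in Ioc (-Real.pi) Real.pi, ∫ α in Ioc (-Real.pi) Real.pi,
        Complex.exp (Complex.I * (m : ℂ) * ((β : ℂ) + (α : ℂ))) *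
          (Real.sin α : ℂ) ^ p * (Real.cos α : ℂ) * g β (α + β)) = 0) :
    ∑ l ∈ Finset.range (p + 1), ((p.choose l : ℂ) * (-1) ^ (p - l) *
        (fcoef g (-(m + (2 * (l : ℤ) - p + 1))) (2 * (l : ℤ) - p + 1)
          + fcoef g (-(m + (2 * (l : ℤ) - p - 1))) (2 * (l : ℤ) - p - 1))) = 0 := by
  have hπ := Real.pi_pos
  set C : ℂ := 1 / ((2 * Complex.I) ^ p * 2) with hC
  set X : ℤ → ℝ → ℂ := fun j β => Complex.exp (-Complex.I * (j : ℂ) * (β : ℝ)) *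
      ∫ θ in Ioc (-Real.pi) Real.pi,
        Complex.exp (Complex.I * ((m + j : ℤ) : ℂ) * (θ : ℝ)) * g β θ with hX
  have hprod := hprod_aux g hgint
  -- Step A : a.e. rewriting of the inner integral
  have hae : ∀ᵐ β : ℝ ∂(volume.restrict (Ioc (-Real.pi) Real.pi)),
      (∫ α in Ioc (-Real.pi) Real.pi,
          Complex.exp (Complex.I * (m : ℂ) * ((β : ℂ) + (α : ℂ))) *
          (Real.sin α : ℂ) ^ p * (Real.cos α : ℂ) * g β (α + β))
      = C * ∑ l ∈ Finset.range (p + 1), ((p.choose l : ℂ) * (-1) ^ (p - l) *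
          (X (2 * (l : ℤ) - p + 1) β + X (2 * (l : ℤ) - p - 1) β)) := by
    filter_upwards [hprod.prod_right_ae, ae_restrict_mem measurableSet_Ioc]
      with β hβint hβmem
    have hβicc : β ∈ Icc (-Real.pi) Real.pi := ⟨hβmem.1.le, hβmem.2⟩
    have hgper2 : Function.Periodic (g β) (2 * Real.pi) := fun θ => (hgper β θ).2
    have hshift : IntegrableOn (fun α => g β (α + β)) (Ioc (-Real.pi) Real.pi) :=
      per_shift_integrable (g β) hgper2 hβint β hβicc
    have hmerge : ∀ j : ℤ, ∀ α : ℝ,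
        Complex.exp (Complex.I * (j : ℂ) * (α : ℂ)) *
          Complex.exp (Complex.I * (m : ℂ) * ((β : ℂ) + (α : ℂ)))
        = Complex.exp (Complex.I * ((m + j : ℤ) : ℂ) * (α : ℝ)) *
          Complex.exp (Complex.I * (m : ℂ) * (β : ℝ)) := by
      intro j α
      rw [← Complex.exp_add, ← Complex.exp_add]
      congr 1
      push_cast
      ring
    have hA1 : ∀ α : ℝ,
        Complex.exp (Complex.I * (m : ℂ) * ((β : ℂ) + (α : ℂ))) *
          (Real.sin α : ℂ) ^ p * (Real.cos α : ℂ) * g β (α + β)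
        = C * ∑ l ∈ Finset.range (p + 1), ((p.choose l : ℂ) * (-1) ^ (p - l) *
            (Complex.exp (Complex.I * ((m + (2 * (l : ℤ) - p + 1) : ℤ) : ℂ) * (α : ℝ)) *
              (Complex.exp (Complex.I * (m : ℂ) * (β : ℝ)) * g β (α + β))
            + Complex.exp (Complex.I * ((m + (2 * (l : ℤ) - p - 1) : ℤ) : ℂ) * (α : ℝ)) *
              (Complex.exp (Complex.I * (m : ℂ) * (β : ℝ)) * g β (α + β)))) := by
      intro α
      have t := T1 p α
      calc Complex.exp (Complex.I * (m : ℂ) * ((β : ℂ) + (α : ℂ))) *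
            (Real.sin α : ℂ) ^ p * (Real.cos α : ℂ) * g β (α + β)
          = ((Real.sin α : ℂ) ^ p * (Real.cos α : ℂ)) *
            (Complex.exp (Complex.I * (m : ℂ) * ((β : ℂ) + (α : ℂ))) * g β (α + β)) := by ring
        _ = (C * ∑ l ∈ Finset.range (p + 1), ((p.choose l : ℂ) * (-1) ^ (p - l) *
              (Complex.exp (Complex.I * ((2 * (l : ℤ) - p + 1 : ℤ) : ℂ) * α) +
               Complex.exp (Complex.I * ((2 * (l : ℤ) - p - 1 : ℤ) : ℂ) * α)))) *
            (Complex.exp (Complex.I * (m : ℂ) * ((β : ℂ) + (α : ℂ))) * g β (α + β)) := by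
            rw [← t]
        _ = C * ∑ l ∈ Finset.range (p + 1), (((p.choose l : ℂ) * (-1) ^ (p - l) *
              (Complex.exp (Complex.I * ((2 * (l : ℤ) - p + 1 : ℤ) : ℂ) * α) +
               Complex.exp (Complex.I * ((2 * (l : ℤ) - p - 1 : ℤ) : ℂ) * α))) *
            (Complex.exp (Complex.I * (m : ℂ) * ((β : ℂ) + (α : ℂ))) * g β (α + β))) := by
            rw [mul_assoc, Finset.sum_mul]
        _ = _ := by
            rw [Finset.mul_sum, Finset.mul_sum]
            refine Finset.sum_congr rfl fun l hl => ?_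
            have h1 := hmerge (2 * (l : ℤ) - p + 1) α
            have h2 := hmerge (2 * (l : ℤ) - p - 1) α
            linear_combination (C * (p.choose l : ℂ) * (-1 : ℂ) ^ (p - l) * g β (α + β)) * h1
              + (C * (p.choose l : ℂ) * (-1 : ℂ) ^ (p - l) * g β (α + β)) * h2
    have hu_int : ∀ j : ℤ, IntegrableOn (fun α =>
        Complex.exp (Complex.I * ((m + j : ℤ) : ℂ) * (α : ℝ)) *
          (Complex.exp (Complex.I * (m : ℂ) * (β : ℝ)) * g β (α + β)))
        (Ioc (-Real.pi) Real.pi) := by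
      intro j
      refine Integrable.bdd_mul (hshift.const_mul _) ?_ (c := 1) (Filter.Eventually.of_forall fun α => ?_)
      · exact (cont_exp_I (m + j)).aestronglyMeasurable
      · rw [norm_exp_I_int]
    have hu_val : ∀ j : ℤ, (∫ α in Ioc (-Real.pi) Real.pi,
        Complex.exp (Complex.I * ((m + j : ℤ) : ℂ) * (α : ℝ)) *
          (Complex.exp (Complex.I * (m : ℂ) * (β : ℝ)) * g β (α + β))) = X j β := by
      intro j
      set W : ℝ → ℂ := fun θ => Complex.exp (Complex.I * ((m + j : ℤ) : ℂ) * (θ : ℝ)) * g β θ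
        with hW
      have hWper : Function.Periodic W (2 * Real.pi) :=
        (exp_I_int_periodic (m + j)).mul hgper2
      have h1 : ∀ α : ℝ,
          Complex.exp (Complex.I * ((m + j : ℤ) : ℂ) * (α : ℝ)) *
            (Complex.exp (Complex.I * (m : ℂ) * (β : ℝ)) * g β (α + β))
          = Complex.exp (-Complex.I * (j : ℂ) * (β : ℝ)) * W (α + β) := by
        intro α
        show _ = Complex.exp (-Complex.I * (j : ℂ) * (β : ℝ)) *
          (Complex.exp (Complex.I * ((m + j : ℤ) : ℂ) * ((α + β : ℝ) : ℂ)) * g β (α + β))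
        rw [← mul_assoc, ← mul_assoc, ← Complex.exp_add, ← Complex.exp_add]
        congr 2
        push_cast
        ring
      simp_rw [h1]
      rw [MeasureTheory.integral_const_mul, per_shift_integral W hWper β]
    simp_rw [hA1]
    rw [MeasureTheory.integral_const_mul, integral_finset_sum]
    · refine congrArg (fun s => C * s) (Finset.sum_congr rfl fun l hl => ?_)
      rw [MeasureTheory.integral_const_mul, integral_add (hu_int _) (hu_int _),
        hu_val, hu_val]
    · intro l hl
      exact (((hu_int _).add (hu_int _)).const_mul _)
  -- Step B : the outer integral
  have hXint : ∀ j : ℤ, Integrable (fun β => X j β)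
      (volume.restrict (Ioc (-Real.pi) Real.pi)) := by
    intro j
    have base : Integrable (fun β => ∫ θ in Ioc (-Real.pi) Real.pi,
        Complex.exp (Complex.I * ((m + j : ℤ) : ℂ) * (θ : ℝ)) * g β θ)
        (volume.restrict (Ioc (-Real.pi) Real.pi)) :=
      (eterm_inner_integrable g (m + j) hgint).integral_prod_left
    refine Integrable.bdd_mul base ?_ (c := 1) (Filter.Eventually.of_forall fun β => ?_)
    · exact (cont_exp_neg_I j).aestronglyMeasurable
    · rw [norm_exp_neg_I_int]
  have hz1 : (∫ β in Ioc (-Real.pi) Real.pi,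
      C * ∑ l ∈ Finset.range (p + 1), ((p.choose l : ℂ) * (-1) ^ (p - l) *
          (X (2 * (l : ℤ) - p + 1) β + X (2 * (l : ℤ) - p - 1) β))) = 0 :=
    (integral_congr_ae hae).symm.trans hzero
  rw [MeasureTheory.integral_const_mul] at hz1
  have hsum_int : (∫ β in Ioc (-Real.pi) Real.pi,
      ∑ l ∈ Finset.range (p + 1), ((p.choose l : ℂ) * (-1) ^ (p - l) *
          (X (2 * (l : ℤ) - p + 1) β + X (2 * (l : ℤ) - p - 1) β)))
      = ∑ l ∈ Finset.range (p + 1), ∫ β in Ioc (-Real.pi) Real.pi,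
          ((p.choose l : ℂ) * (-1) ^ (p - l) *
          (X (2 * (l : ℤ) - p + 1) β + X (2 * (l : ℤ) - p - 1) β)) :=
    integral_finset_sum _ (fun l _ => (((hXint _).add (hXint _)).const_mul _))
  rw [hsum_int] at hz1
  have hzero2 : ∑ l ∈ Finset.range (p + 1), ((p.choose l : ℂ) * (-1) ^ (p - l) *
      ((∫ β in Ioc (-Real.pi) Real.pi, X (2 * (l : ℤ) - p + 1) β)
        + (∫ β in Ioc (-Real.pi) Real.pi, X (2 * (l : ℤ) - p - 1) β))) = 0 := by
    have hCne : C ≠ 0 := by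
      rw [hC]
      exact one_div_ne_zero (mul_ne_zero (pow_ne_zero _
        (mul_ne_zero two_ne_zero Complex.I_ne_zero)) two_ne_zero)
    have h0 := (mul_eq_zero.mp hz1).resolve_left hCne
    rw [← h0]
    refine Finset.sum_congr rfl fun l hl => ?_
    rw [MeasureTheory.integral_const_mul, integral_add (hXint _) (hXint _)]
  have hXval : ∀ j : ℤ, (∫ β in Ioc (-Real.pi) Real.pi, X j β)
      = (2 * (Real.pi : ℂ)) ^ 2 * fcoef g (-(m + j)) j := by
    intro j
    rw [hX]
    simp_rw [← MeasureTheory.integral_const_mul]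
    exact eterm_integral g m j
  simp_rw [hXval] at hzero2
  have hne2 : ((2 : ℂ) * (Real.pi : ℂ)) ^ 2 ≠ 0 :=
    pow_ne_zero _ (mul_ne_zero two_ne_zero (Complex.ofReal_ne_zero.mpr Real.pi_ne_zero))
  have hfin : (2 * (Real.pi : ℂ)) ^ 2 *
      ∑ l ∈ Finset.range (p + 1), ((p.choose l : ℂ) * (-1) ^ (p - l) *
        (fcoef g (-(m + (2 * (l : ℤ) - p + 1))) (2 * (l : ℤ) - p + 1)
          + fcoef g (-(m + (2 * (l : ℤ) - p - 1))) (2 * (l : ℤ) - p - 1))) = 0 := by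
    rw [Finset.mul_sum, ← hzero2]
    refine Finset.sum_congr rfl fun l hl => ?_
    ring
  exact (mul_eq_zero.mp hfin).resolve_left hne2

end EXPAND

lemma neg_one_pow_odd_sum {a b : ℕ} (h : Odd (a + b)) : (-1 : ℂ) ^ a = -(-1) ^ b := by
  have h1 : (-1 : ℂ) ^ a * (-1) ^ b = -1 := by
    rw [← pow_add]; exact h.neg_one_pow
  have h2 : (-1 : ℂ) ^ b * (-1) ^ b = 1 := by
    rw [← pow_add]; exact (Even.add_self b).neg_one_pow
  calc (-1 : ℂ) ^ a = (-1) ^ a * ((-1) ^ b * (-1) ^ b) := by rw [h2, mul_one]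
    _ = ((-1) ^ a * (-1) ^ b) * (-1) ^ b := by ring
    _ = -(-1) ^ b := by rw [h1]; ring

lemma ALG (p : ℕ) (F : ℤ → ℂ)
    (hF : ∀ j : ℕ, j ≤ p → j % 2 = (p + 1) % 2 → F (-(j : ℤ)) = (-1) ^ j * F j) :
    ∑ l ∈ Finset.range (p + 1), ((p.choose l : ℂ) * (-1) ^ (p - l) *
        (F (2 * (l : ℤ) - p + 1) + F (2 * (l : ℤ) - p - 1)))
      = F ((p : ℤ) + 1) + (-1) ^ p * F (-(p : ℤ) - 1) := by
  have split : ∀ l ∈ Finset.range (p + 1),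
      (p.choose l : ℂ) * (-1) ^ (p - l) * (F (2 * (l : ℤ) - p + 1) + F (2 * (l : ℤ) - p - 1))
      = (p.choose l : ℂ) * (-1) ^ (p - l) * F (2 * (l : ℤ) - p + 1)
        + (p.choose l : ℂ) * (-1) ^ (p - l) * F (2 * (l : ℤ) - p - 1) := fun l _ => by ring
  rw [Finset.sum_congr rfl split, Finset.sum_add_distrib]
  have refl2 : ∑ l ∈ Finset.range (p + 1),
      ((p.choose l : ℂ) * (-1) ^ (p - l) * F (2 * (l : ℤ) - p - 1))
      = ∑ l ∈ Finset.range (p + 1),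
      ((p.choose l : ℂ) * (-1) ^ l * F (-(2 * (l : ℤ) - p + 1))) := by
    rw [← Finset.sum_range_reflect
      (fun l => (p.choose l : ℂ) * (-1) ^ (p - l) * F (2 * (l : ℤ) - p - 1)) (p + 1)]
    refine Finset.sum_congr rfl fun l hl => ?_
    rw [Finset.mem_range, Nat.lt_succ_iff] at hl
    have h1 : p + 1 - 1 - l = p - l := by omega
    have h3 : (((p - l : ℕ)) : ℤ) = (p : ℤ) - l := by omega
    simp only [h1]
    rw [Nat.choose_symm hl, show p - (p - l) = l by omega,
      show 2 * (((p - l : ℕ)) : ℤ) - p - 1 = -(2 * (l : ℤ) - p + 1) by rw [h3]; ring]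
  rw [refl2, ← Finset.sum_add_distrib, Finset.sum_range_succ]
  have hzero : ∑ l ∈ Finset.range p,
      ((p.choose l : ℂ) * (-1) ^ (p - l) * F (2 * (l : ℤ) - p + 1)
        + (p.choose l : ℂ) * (-1) ^ l * F (-(2 * (l : ℤ) - p + 1))) = 0 := by
    refine Finset.sum_eq_zero fun l hl => ?_
    rw [Finset.mem_range] at hl
    rcases le_or_gt 0 (2 * (l : ℤ) - p + 1) with hJ | hJ
    · set j : ℕ := (2 * (l : ℤ) - p + 1).toNat with hj
      have hJ' : (j : ℤ) = 2 * (l : ℤ) - p + 1 := Int.toNat_of_nonneg hJ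
      have hjle : j ≤ p := by omega
      have hjpar : j % 2 = (p + 1) % 2 := by omega
      have hFJ : F (-(2 * (l : ℤ) - p + 1)) = (-1) ^ j * F (2 * (l : ℤ) - p + 1) := by
        rw [show -(2 * (l : ℤ) - p + 1) = -(j : ℤ) by omega, hF j hjle hjpar,
          show ((j : ℕ) : ℤ) = 2 * (l : ℤ) - p + 1 by omega]
      rw [hFJ]
      have hsign : (-1 : ℂ) ^ (l + j) = -(-1) ^ (p - l) :=
        neg_one_pow_odd_sum ⟨l, by omega⟩
      linear_combination ((p.choose l : ℂ) * F (2 * (l : ℤ) - p + 1)) * hsign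
    · set j : ℕ := (-(2 * (l : ℤ) - p + 1)).toNat with hj
      have hJ' : (j : ℤ) = -(2 * (l : ℤ) - p + 1) := Int.toNat_of_nonneg (by omega)
      have hjle : j ≤ p := by omega
      have hjpar : j % 2 = (p + 1) % 2 := by omega
      have hFJ : F (2 * (l : ℤ) - p + 1) = (-1) ^ j * F (-(2 * (l : ℤ) - p + 1)) := by
        rw [show (2 * (l : ℤ) - p + 1) = -(j : ℤ) by omega, hF j hjle hjpar, neg_neg]
      rw [hFJ]
      have hsign : (-1 : ℂ) ^ ((p - l) + j) = -(-1) ^ l :=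
        neg_one_pow_odd_sum ⟨p - l - 1, by omega⟩
      linear_combination ((p.choose l : ℂ) * F (-(2 * (l : ℤ) - p + 1))) * hsign
  rw [hzero, zero_add, Nat.choose_self, Nat.sub_self,
    show 2 * (p : ℤ) - p + 1 = (p : ℤ) + 1 by ring,
    show -((p : ℤ) + 1) = -(p : ℤ) - 1 by ring]
  push_cast
  ring

/-- Remark 6.3: the GGHL moment conditions (with `|m| > p` and `p - m` even)
yield the moment constraints `g_{n,k} = (-1)^k g_{n+2k,-k}` for odd `n ≤ -1`, `k ≤ 0`. -/
theorem stmt8 (g : ℝ → ℝ → ℂ)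
    (hgper : ∀ β θ : ℝ, g (β + 2 * Real.pi) θ = g β θ ∧ g β (θ + 2 * Real.pi) = g β θ)
    (hgint : IntegrableOn (fun q : ℝ × ℝ => g q.1 q.2)
      (Ioc (-Real.pi) Real.pi ×ˢ Ioc (-Real.pi) Real.pi))
    (hmom : ∀ p : ℕ, ∀ m : ℤ, (p : ℤ) < |m| → Even ((p : ℤ) - m) →
      IntegrableOn (fun q : ℝ × ℝ =>
        Complex.exp (Complex.I * (m : ℂ) * ((q.1 : ℂ) + (q.2 : ℂ))) *
          (Real.sin q.2 : ℂ) ^ p * (Real.cos q.2 : ℂ) * g q.1 (q.2 + q.1))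
        (Ioc (-Real.pi) Real.pi ×ˢ Ioc (-Real.pi) Real.pi) ∧
      (∫ β in Ioc (-Real.pi) Real.pi, ∫ α in Ioc (-Real.pi) Real.pi,
        Complex.exp (Complex.I * (m : ℂ) * ((β : ℂ) + (α : ℂ))) *
          (Real.sin α : ℂ) ^ p * (Real.cos α : ℂ) * g β (α + β)) = 0) :
    ∀ n k : ℤ, Odd n → n ≤ -1 → k ≤ 0 →
      fcoef g n k = (-1 : ℂ) ^ k * fcoef g (n + 2 * k) (-k) := by
  -- the main induction
  have key : ∀ K : ℕ, ∀ n : ℤ, Odd n → n ≤ -1 →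
      fcoef g n (-(K : ℤ)) = (-1 : ℂ) ^ K * fcoef g (n - 2 * K) K := by
    intro K
    induction K using Nat.strong_induction_on with
    | _ K IH =>
      intro n hn hnle
      rcases Nat.eq_zero_or_pos K with hK0 | hKpos
      · subst hK0
        simp
      · set p : ℕ := K - 1 with hp
        set m : ℤ := (K : ℤ) - n with hm
        have hmpos : 0 < m := by omega
        have hcond1 : (p : ℤ) < |m| := by
          rw [abs_of_pos hmpos]
          omega
        have hcond2 : Even ((p : ℤ) - m) := by
          obtain ⟨t, ht⟩ := hn
          refine ⟨((p : ℤ) - m) / 2, ?_⟩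
          omega
        have hz := (hmom p m hcond1 hcond2).2
        have hsum := moment_expand g hgper hgint p m hz
        have halg := ALG p (fun j => fcoef g (-(m + j)) j) ?_
        · -- combine
          have hcomb : fcoef g (-(m + ((p : ℤ) + 1))) ((p : ℤ) + 1)
              + (-1 : ℂ) ^ p * fcoef g (-(m + (-(p : ℤ) - 1))) (-(p : ℤ) - 1) = 0 := by
            rw [← halg]
            exact hsum
          rw [show -(m + ((p : ℤ) + 1)) = n - 2 * K by omega,
            show ((p : ℤ) + 1) = (K : ℤ) by omega,
            show -(m + (-(p : ℤ) - 1)) = n by omega,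
            show (-(p : ℤ) - 1) = -(K : ℤ) by omega] at hcomb
          have hs : (-1 : ℂ) ^ p * (-1 : ℂ) ^ p = 1 := by
            rw [← pow_add]; exact (Even.add_self p).neg_one_pow
          have hKp : (-1 : ℂ) ^ K = -(-1 : ℂ) ^ p := by
            rw [show K = p + 1 by omega, pow_succ]
            ring
          linear_combination ((-1 : ℂ) ^ p) * hcomb - (fcoef g (n - 2 * K) K) * hKp
            - (fcoef g n (-(K : ℤ))) * hs
        · -- the IH hypothesis for ALG
          intro j hjle hjpar
          have hj : j < K := by omega
          obtain ⟨t, ht⟩ := hn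
          have hodd : Odd (n - K + j) := by
            refine ⟨(n - K + j - 1) / 2, ?_⟩
            omega
          have hle : n - K + j ≤ -1 := by omega
          show fcoef g (-(m + -(j : ℤ))) (-(j : ℤ))
            = (-1 : ℂ) ^ j * fcoef g (-(m + (j : ℤ))) (j : ℤ)
          rw [show (-(m + -(j : ℤ))) = n - (K : ℤ) + j by omega,
            show (-(m + (j : ℤ))) = n - (K : ℤ) + j - 2 * j by omega]
          exact IH j hj (n - (K : ℤ) + j) hodd hle
  intro n k hn hnle hkle
  set K : ℕ := (-k).toNat with hK
  have hKk : (K : ℤ) = -k := Int.toNat_of_nonneg (by omega)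
  have h := key K n hn hnle
  rw [show -(K : ℤ) = k by omega, show n - 2 * (K : ℤ) = n + 2 * k by omega,
    show ((K : ℕ) : ℤ) = -k from hKk] at h
  rw [h]
  congr 1
  rw [show k = -(K : ℤ) by omega, zpow_neg, zpow_natCast, ← inv_pow, inv_neg_one]
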